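/- Let X be a finitely supported random vector in ℝ^d. Then there exists a random vector Y supported on at most d+1 points of the support of X such that E[Y] = E[X] and Var(Y) ≤ Var(X), where Var denotes E‖·−E[·]‖². -/

import Mathlib

open Finset

lemma carath_key (d : ℕ) (μ : EuclideanSpace ℝ (Fin d)) :
    ∀ n (s : Finset (EuclideanSpace ℝ (Fin d))) (p : EuclideanSpace ℝ (Fin d) → ℝ),
      s.card ≤ n → (∀ x ∈ s, 0 < p x) → ∑ x ∈ s, p x = 1 →
      ∑ x ∈ s, p x • x = μ →
      ∃ (t : Finset (EuclideanSpace ℝ (Fin d))) (q : EuclideanSpace ℝ (Fin d) → ℝ),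
        t ⊆ s ∧ t.card ≤ d + 1 ∧ (∀ x ∈ t, 0 ≤ q x) ∧ (∑ x ∈ t, q x = 1) ∧
        (∑ x ∈ t, q x • x = μ) ∧
        (∑ x ∈ t, q x * ‖x - μ‖^2 ≤ ∑ x ∈ s, p x * ‖x - μ‖^2) := by
  intro n
  induction n with
  | zero =>
    intro s p hcard _ hsum _
    rw [Finset.card_eq_zero.mp (Nat.le_zero.mp hcard)] at hsum
    simp at hsum
  | succ n ih =>
    intro s p hcard hpos hsum hmean
    by_cases hle : s.card ≤ d + 1
    · exact ⟨s, p, subset_rfl, hle, fun x hx => (hpos x hx).le, hsum, hmean, le_refl _⟩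
    · push_neg at hle
      have hrank : Module.finrank ℝ (EuclideanSpace ℝ (Fin d)) + 1 < s.card := by
        rwa [finrank_euclideanSpace_fin]
      obtain ⟨c₀, hc₀vec, hc₀sum, x₁, hx₁, hx₁ne⟩ :=
        Module.exists_nontrivial_relation_sum_zero_of_finrank_succ_lt_card hrank
      -- choose sign so that ∑ c x * ‖x-μ‖² ≥ 0
      obtain ⟨c, hcvec, hcsum, hA, hcx₁⟩ :
          ∃ c : EuclideanSpace ℝ (Fin d) → ℝ, ∑ x ∈ s, c x • x = 0 ∧
            ∑ x ∈ s, c x = 0 ∧ 0 ≤ ∑ x ∈ s, c x * ‖x - μ‖^2 ∧ c x₁ ≠ 0 := by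
        rcases le_or_gt 0 (∑ x ∈ s, c₀ x * ‖x - μ‖^2) with h | h
        · exact ⟨c₀, hc₀vec, hc₀sum, h, hx₁ne⟩
        · refine ⟨fun x => -c₀ x, by simp [hc₀vec], by simp [hc₀sum], ?_, by simpa using hx₁ne⟩
          simp only [neg_mul, Finset.sum_neg_distrib]
          linarith
      -- there is a point with positive coefficient
      have hexpos : ∃ x ∈ s, 0 < c x := by
        by_contra h
        push_neg at h
        have := (Finset.sum_eq_zero_iff_of_nonpos h).mp hcsum
        exact hcx₁ (this x₁ hx₁)
      set P := s.filter (fun x => 0 < c x) with hP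
      have hPne : P.Nonempty := by
        obtain ⟨x, hx, hcx⟩ := hexpos
        exact ⟨x, Finset.mem_filter.mpr ⟨hx, hcx⟩⟩
      obtain ⟨x₀, hx₀P, hx₀min⟩ := P.exists_min_image (fun x => p x / c x) hPne
      have hx₀s : x₀ ∈ s := (Finset.mem_filter.mp hx₀P).1
      have hcx₀ : 0 < c x₀ := (Finset.mem_filter.mp hx₀P).2
      set lam := p x₀ / c x₀ with hlam
      have hlampos : 0 < lam := div_pos (hpos _ hx₀s) hcx₀
      set p' := fun x => p x - lam * c x with hp'
      have hp'nonneg : ∀ x ∈ s, 0 ≤ p' x := by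
        intro x hx
        rcases le_or_gt (c x) 0 with h | h
        · have : lam * c x ≤ 0 := mul_nonpos_of_nonneg_of_nonpos hlampos.le h
          have := hpos x hx
          simp only [hp']; linarith
        · have hxP : x ∈ P := Finset.mem_filter.mpr ⟨hx, h⟩
          have hmin := hx₀min x hxP
          rw [div_le_div_iff₀ hcx₀ h] at hmin
          have h2 : lam * c x ≤ p x := by
            rw [hlam, div_mul_eq_mul_div, div_le_iff₀ hcx₀]
            linarith
          simp only [hp']; linarith
      have hp'x₀ : p' x₀ = 0 := by
        simp only [hp', hlam]
        field_simp
        ring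
      have hp'sum : ∑ x ∈ s, p' x = 1 := by
        simp only [hp', Finset.sum_sub_distrib, ← Finset.mul_sum, hcsum, hsum, mul_zero, sub_zero]
      have hp'mean : ∑ x ∈ s, p' x • x = μ := by
        simp only [hp', sub_smul, Finset.sum_sub_distrib, mul_smul, ← Finset.smul_sum, hcvec,
          smul_zero, sub_zero, hmean]
      have hp'var : ∑ x ∈ s, p' x * ‖x - μ‖^2 ≤ ∑ x ∈ s, p x * ‖x - μ‖^2 := by
        simp only [hp', sub_mul, Finset.sum_sub_distrib, mul_assoc, ← Finset.mul_sum]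
        nlinarith [mul_nonneg hlampos.le hA]
      set s' := s.filter (fun x => 0 < p' x) with hs'
      have hsub : s' ⊆ s := Finset.filter_subset _ _
      have hcardlt : s'.card < s.card := by
        apply Finset.card_lt_card
        refine ⟨hsub, fun h => ?_⟩
        have := h hx₀s
        rw [hs', Finset.mem_filter] at this
        linarith [this.2, hp'x₀.symm ▸ this.2]
      have hzeroes : ∀ x ∈ s, x ∉ s' → p' x = 0 := by
        intro x hx hxn
        rcases (hp'nonneg x hx).lt_or_eq with h | h
        · exact absurd (Finset.mem_filter.mpr ⟨hx, h⟩) hxn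
        · exact h.symm
      have hsum' : ∑ x ∈ s', p' x = 1 := by
        rw [← hp'sum]
        exact Finset.sum_subset hsub (fun x hx hxn => hzeroes x hx hxn)
      have hmean' : ∑ x ∈ s', p' x • x = μ := by
        rw [← hp'mean]
        exact Finset.sum_subset hsub (fun x hx hxn => by simp [hzeroes x hx hxn])
      have hvar' : ∑ x ∈ s', p' x * ‖x - μ‖^2 = ∑ x ∈ s, p' x * ‖x - μ‖^2 :=
        Finset.sum_subset hsub (fun x hx hxn => by simp [hzeroes x hx hxn])
      obtain ⟨t, q, hts, htcard, hq0, hqsum, hqmean, hqvar⟩ :=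
        ih s' p' (by omega) (fun x hx => (Finset.mem_filter.mp hx).2) hsum' hmean'
      exact ⟨t, q, hts.trans hsub, htcard, hq0, hqsum, hqmean, by
        calc ∑ x ∈ t, q x * ‖x - μ‖^2 ≤ ∑ x ∈ s', p' x * ‖x - μ‖^2 := hqvar
          _ = ∑ x ∈ s, p' x * ‖x - μ‖^2 := hvar'
          _ ≤ ∑ x ∈ s, p x * ‖x - μ‖^2 := hp'var⟩

theorem caratheodory_mean_variance
    (d : ℕ) (s : Finset (EuclideanSpace ℝ (Fin d)))
    (p : EuclideanSpace ℝ (Fin d) → ℝ) (hp : ∀ x ∈ s, 0 ≤ p x)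
    (hsum : ∑ x ∈ s, p x = 1) :
    ∃ (t : Finset (EuclideanSpace ℝ (Fin d))) (q : EuclideanSpace ℝ (Fin d) → ℝ),
      t ⊆ s ∧ (∀ x ∈ t, 0 < p x) ∧ t.card ≤ d + 1 ∧
      (∀ x ∈ t, 0 ≤ q x) ∧ (∑ x ∈ t, q x = 1) ∧
      (∑ x ∈ t, q x • x = ∑ x ∈ s, p x • x) ∧
      (∑ x ∈ t, q x * ‖x - ∑ y ∈ s, p y • y‖^2 ≤
        ∑ x ∈ s, p x * ‖x - ∑ y ∈ s, p y • y‖^2) := by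
  classical
  set μ := ∑ y ∈ s, p y • y with hμ
  set s₀ := s.filter (fun x => 0 < p x) with hs₀
  have hsub : s₀ ⊆ s := Finset.filter_subset _ _
  have hzeroes : ∀ x ∈ s, x ∉ s₀ → p x = 0 := by
    intro x hx hxn
    rcases (hp x hx).lt_or_eq with h | h
    · exact absurd (Finset.mem_filter.mpr ⟨hx, h⟩) hxn
    · exact h.symm
  have hsum₀ : ∑ x ∈ s₀, p x = 1 := by
    rw [← hsum]; exact Finset.sum_subset hsub (fun x hx hxn => hzeroes x hx hxn)
  have hmean₀ : ∑ x ∈ s₀, p x • x = μ := by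
    rw [hμ]; exact Finset.sum_subset hsub (fun x hx hxn => by simp [hzeroes x hx hxn])
  have hvar₀ : ∑ x ∈ s₀, p x * ‖x - μ‖^2 = ∑ x ∈ s, p x * ‖x - μ‖^2 :=
    Finset.sum_subset hsub (fun x hx hxn => by simp [hzeroes x hx hxn])
  obtain ⟨t, q, hts, htcard, hq0, hqsum, hqmean, hqvar⟩ :=
    carath_key d μ s₀.card s₀ p le_rfl (fun x hx => (Finset.mem_filter.mp hx).2) hsum₀ hmean₀
  exact ⟨t, q, hts.trans hsub, fun x hx => (Finset.mem_filter.mp (hts hx)).2, htcard, hq0,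
    hqsum, hqmean, by rw [← hvar₀]; exact hqvar⟩
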